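/- arXiv:1507.02097 — 5 statements merged into one kernel-verified Lean document; each statement's English description precedes it below -/
import Mathlib

section
/- Let k > 0 and ε ∈ ℝ with 0 < |ε| ≤ k², let z ∈ ℂ satisfy z² = k² + iε and Im z > 0, and let η ∈ ℂ satisfy Re((conj z)·η) ≥ 0. Set Θ := −(conj z)/|z|. Then for all real a, b, c ≥ 0, writing A := a − z²·b − i·η·c, one has |A| ≥ Im(Θ·A) ≥ (|ε|/(2√2·k²))·(a + k²·b). -/
set_option maxHeartbeats 1000000 in
/-- The paper's coercivity Lemma 2.4 in algebraic form with an explicit constant: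
with `z² = k² + iε`, `Im z > 0`, `Re(conj(z)η) ≥ 0`, `Θ = -conj(z)/|z|`, and
`A = a - z²b - iηc` for `a,b,c ≥ 0`, one has
`|A| ≥ Im(ΘA) ≥ (|ε|/(2√2 k²))(a + k²b)`. -/
theorem stmt_4 (k ε : ℝ) (hk : 0 < k) (hε0 : 0 < |ε|) (hεk : |ε| ≤ k ^ 2)
    (z : ℂ) (hz : z ^ 2 = (k ^ 2 : ℂ) + Complex.I * (ε : ℂ)) (him : 0 < z.im)
    (η : ℂ) (hη : 0 ≤ ((starRingEnd ℂ) z * η).re)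
    (a b c : ℝ) (ha : 0 ≤ a) (hb : 0 ≤ b) (hc : 0 ≤ c) :
    |ε| / (2 * Real.sqrt 2 * k ^ 2) * (a + k ^ 2 * b) ≤
      ((-(starRingEnd ℂ) z / ((‖z‖ : ℝ) : ℂ)) *
        ((a : ℂ) - z ^ 2 * (b : ℂ) - Complex.I * η * (c : ℂ))).im ∧
    ((-(starRingEnd ℂ) z / ((‖z‖ : ℝ) : ℂ)) *
        ((a : ℂ) - z ^ 2 * (b : ℂ) - Complex.I * η * (c : ℂ))).im ≤
      ‖(a : ℂ) - z ^ 2 * (b : ℂ) - Complex.I * η * (c : ℂ)‖ := by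
  have hz0 : z ≠ 0 := by
    intro h; rw [h] at him; simp at him
  set x := z.re with hx
  set y := z.im with hy
  have h1 : x ^ 2 - y ^ 2 = k ^ 2 := by
    have := congrArg Complex.re hz
    simp [pow_two, Complex.mul_re, Complex.mul_im] at this
    linarith [this]
  have h2 : 2 * (x * y) = ε := by
    have := congrArg Complex.im hz
    simp [pow_two, Complex.mul_re, Complex.mul_im] at this
    linarith [this]
  set r := ‖z‖ with hrdef
  have hr0 : 0 < r := norm_pos_iff.mpr hz0
  have hr2 : r ^ 2 = x ^ 2 + y ^ 2 := by
    rw [hrdef, Complex.sq_norm, Complex.normSq_apply]; ring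
  have hR : ((starRingEnd ℂ) z * η).re = x * η.re + y * η.im := by
    simp [Complex.mul_re, hx, hy]
  have hkey : ((-(starRingEnd ℂ) z / ((‖z‖ : ℝ) : ℂ)) *
        ((a : ℂ) - z ^ 2 * (b : ℂ) - Complex.I * η * (c : ℂ))).im
      = (y * a + y * (x ^ 2 + y ^ 2) * b + c * (x * η.re + y * η.im)) / r := by
    rw [hz]
    rw [neg_div, neg_mul, Complex.neg_im, div_mul_eq_mul_div, Complex.div_ofReal_im, ← neg_div]
    congr 1
    simp [Complex.mul_im, Complex.mul_re, ← Complex.ofReal_pow]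
    linear_combination (-(b*x)) * h2 + (b*y) * h1
  rw [← hrdef] at hkey
  clear_value x y r
  rw [← hr2] at hkey
  have hε2 : ε ^ 2 ≤ k ^ 4 := by nlinarith [sq_abs ε, abs_nonneg ε]
  have hx2 : x ^ 2 = k ^ 2 + y ^ 2 := by linarith
  have hs2 : (Real.sqrt 2) ^ 2 = 2 := Real.sq_sqrt (by norm_num)
  have hk2r : k ^ 2 ≤ r ^ 2 := by nlinarith [sq_nonneg y]
  have hεy : ε ^ 2 = 4 * (k ^ 2 + y ^ 2) * y ^ 2 := by
    linear_combination (-(2*x*y + ε)) * h2 + 4 * y ^ 2 * hx2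
  have hu : 4 * k ^ 2 * y ^ 2 + 4 * y ^ 4 ≤ k ^ 4 := by nlinarith [hεy, hε2]
  have hcore : (|ε| * r) ^ 2 ≤ (y * (2 * Real.sqrt 2 * k ^ 2)) ^ 2 := by
    have habs : |ε| ^ 2 = ε ^ 2 := sq_abs ε
    have hpow : (y * (2 * Real.sqrt 2 * k ^ 2)) ^ 2 = 8 * y ^ 2 * k ^ 4 := by
      rw [mul_pow, mul_pow, mul_pow, hs2]; ring
    rw [mul_pow, habs, hpow, hεy, hr2, hx2]
    nlinarith [hu, sq_nonneg y, sq_nonneg (y*y), sq_nonneg (k*y), mul_pos him him]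
  have hyr : |ε| / (2 * Real.sqrt 2 * k ^ 2) ≤ y / r := by
    rw [div_le_div_iff₀ (by positivity) hr0]
    have h1' := Real.sqrt_le_sqrt hcore
    rwa [Real.sqrt_sq (by positivity), Real.sqrt_sq (by positivity)] at h1'
  constructor
  · rw [hkey]
    have hRn : 0 ≤ x * η.re + y * η.im := by rw [← hR]; exact hη
    have step1 : |ε| / (2 * Real.sqrt 2 * k ^ 2) * (a + k ^ 2 * b)
        ≤ (y / r) * (a + k ^ 2 * b) := by
      apply mul_le_mul_of_nonneg_right hyr; positivity
    refine step1.trans ?_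
    rw [div_mul_eq_mul_div, div_le_div_iff₀ hr0 hr0]
    have hstep : y * (a + k ^ 2 * b) ≤ y * a + y * r ^ 2 * b + c * (x * η.re + y * η.im) := by
      nlinarith [mul_nonneg hc hRn, mul_le_mul_of_nonneg_left hk2r (mul_nonneg him.le hb)]
    exact mul_le_mul_of_nonneg_right hstep hr0.le
  · refine (Complex.im_le_norm _).trans_eq ?_
    rw [norm_mul, norm_div, norm_neg, Complex.norm_conj, Complex.norm_real,
      Real.norm_of_nonneg hr0.le, ← hrdef, div_self hr0.ne', one_mul]
end

section
/- Let V be a complex inner product space with norm ‖·‖, and let a : V × V → ℂ be a sesquilinear form (linear in its first argument, conjugate-linear in its second). Assume there are constants C_c > 0, γ > 0 and Θ ∈ ℂ with |Θ| = 1 such that |a(u,w)| ≤ C_c·‖u‖·‖w‖ for all u, w ∈ V, and Im(Θ·a(v,v)) ≥ γ·‖v‖² for all v ∈ V. Let V₀, …, V_N be subspaces of V and let Q₀, …, Q_N : V → V be maps such that for each ℓ and each v ∈ V, Q_ℓ v ∈ V_ℓ and a(Q_ℓ v, w) = a(v, w) for all w ∈ V_ℓ. Assume there is C_Λ ≥ 1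 such that ‖∑_{ℓ=0}^N w_ℓ‖² ≤ C_Λ·∑_{ℓ=0}^N ‖w_ℓ‖² for every choice of w_ℓ ∈ V_ℓ. Then for every v ∈ V, ‖∑_{ℓ=0}^N Q_ℓ v‖ ≤ (C_Λ·C_c/γ)·‖v‖. -/
/-- Abstract form of the paper's Theorem 4.3 (upper bound on the additive Schwarz
operator `Q = ∑ Q_ℓ`): for a continuous and coercive sesquilinear form `a`
(linear in the first argument, conjugate-linear in the second) and `a`-projections
`Q_ℓ` onto subspaces `V_ℓ` satisfying a finite-overlap type summation bound,
`‖∑_{ℓ=0}^N Q_ℓ v‖ ≤ (C_Λ C_c / γ) ‖v‖`. -/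
theorem stmt_6 {V : Type*} [NormedAddCommGroup V] [InnerProductSpace ℂ V]
    (a : V → V → ℂ)
    (ha_add_left : ∀ u₁ u₂ w, a (u₁ + u₂) w = a u₁ w + a u₂ w)
    (ha_smul_left : ∀ (c : ℂ) u w, a (c • u) w = c * a u w)
    (ha_add_right : ∀ u w₁ w₂, a u (w₁ + w₂) = a u w₁ + a u w₂)
    (ha_smul_right : ∀ (c : ℂ) u w, a u (c • w) = (starRingEnd ℂ) c * a u w)
    (Cc γ : ℝ) (hCc : 0 < Cc) (hγ : 0 < γ)
    (Θ : ℂ) (hΘ : ‖Θ‖ = 1)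
    (hcont : ∀ u w, ‖a u w‖ ≤ Cc * ‖u‖ * ‖w‖)
    (hcoer : ∀ v : V, γ * ‖v‖ ^ 2 ≤ (Θ * a v v).im)
    (N : ℕ) (Vs : ℕ → Submodule ℂ V) (Q : ℕ → V → V)
    (hQmem : ∀ ℓ ≤ N, ∀ v : V, Q ℓ v ∈ Vs ℓ)
    (hQproj : ∀ ℓ ≤ N, ∀ v : V, ∀ w ∈ Vs ℓ, a (Q ℓ v) w = a v w)
    (CΛ : ℝ) (hCΛ : 1 ≤ CΛ)
    (hsum : ∀ w : ℕ → V, (∀ ℓ ≤ N, w ℓ ∈ Vs ℓ) →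
      ‖∑ ℓ ∈ Finset.range (N + 1), w ℓ‖ ^ 2 ≤
        CΛ * ∑ ℓ ∈ Finset.range (N + 1), ‖w ℓ‖ ^ 2)
    (v : V) :
    ‖∑ ℓ ∈ Finset.range (N + 1), Q ℓ v‖ ≤ (CΛ * Cc / γ) * ‖v‖ := by
  set u := ∑ ℓ ∈ Finset.range (N + 1), Q ℓ v with hu
  set S := ∑ ℓ ∈ Finset.range (N + 1), ‖Q ℓ v‖ ^ 2 with hS
  have hS0 : 0 ≤ S := Finset.sum_nonneg fun ℓ _ => sq_nonneg _
  -- a v 0 = 0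
  have ha0 : ∀ x : V, a x (0 : V) = 0 := by
    intro x
    have := ha_smul_right 0 x 0
    simpa using this
  -- sum linearity in second slot
  have hsum_right : a v u = ∑ ℓ ∈ Finset.range (N + 1), a v (Q ℓ v) := by
    rw [hu]
    induction (Finset.range (N + 1)) using Finset.induction with
    | empty => simpa using ha0 v
    | insert _ _ hx ih =>
      rw [Finset.sum_insert hx, Finset.sum_insert hx, ha_add_right, ih]
  -- key coercivity step: γ S ≤ Im (Θ * a v u)
  have key : γ * S ≤ (Θ * a v u).im := by
    have h1 : ∀ ℓ ∈ Finset.range (N + 1),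
        γ * ‖Q ℓ v‖ ^ 2 ≤ (Θ * a v (Q ℓ v)).im := by
      intro ℓ hℓ
      have hℓN : ℓ ≤ N := Nat.lt_succ_iff.mp (Finset.mem_range.mp hℓ)
      have := hcoer (Q ℓ v)
      rwa [hQproj ℓ hℓN v (Q ℓ v) (hQmem ℓ hℓN v)] at this
    calc γ * S = ∑ ℓ ∈ Finset.range (N + 1), γ * ‖Q ℓ v‖ ^ 2 := by
              rw [hS, Finset.mul_sum]
      _ ≤ ∑ ℓ ∈ Finset.range (N + 1), (Θ * a v (Q ℓ v)).im :=
              Finset.sum_le_sum h1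
      _ = (Θ * a v u).im := by
              rw [hsum_right, Finset.mul_sum, Complex.im_sum]
  -- bound Im by modulus and continuity
  have h2 : (Θ * a v u).im ≤ Cc * ‖v‖ * ‖u‖ := by
    calc (Θ * a v u).im ≤ ‖Θ * a v u‖ := Complex.im_le_norm _
      _ = ‖a v u‖ := by rw [norm_mul, hΘ, one_mul]
      _ ≤ Cc * ‖v‖ * ‖u‖ := hcont v u
  have hγS : γ * S ≤ Cc * ‖v‖ * ‖u‖ := key.trans h2
  -- stability bound
  have hu2 : ‖u‖ ^ 2 ≤ CΛ * S := by
    apply hsum (fun ℓ => Q ℓ v)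
    intro ℓ hℓ
    exact hQmem ℓ hℓ v
  -- combine
  have hCΛ0 : 0 < CΛ := lt_of_lt_of_le one_pos hCΛ
  have hmain : ‖u‖ ^ 2 ≤ (CΛ * Cc / γ) * ‖v‖ * ‖u‖ := by
    have : CΛ * (γ * S) ≤ CΛ * (Cc * ‖v‖ * ‖u‖) := by
      exact mul_le_mul_of_nonneg_left hγS hCΛ0.le
    have h3 : γ * (CΛ * S) ≤ CΛ * (Cc * ‖v‖ * ‖u‖) := by linarith [this]
    have h4 : γ * ‖u‖ ^ 2 ≤ CΛ * (Cc * ‖v‖ * ‖u‖) :=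
      le_trans (mul_le_mul_of_nonneg_left hu2 hγ.le) h3
    rw [div_mul_eq_mul_div, div_mul_eq_mul_div, le_div_iff₀ hγ]
    ring_nf
    ring_nf at h4
    linarith
  rcases eq_or_lt_of_le (norm_nonneg u) with h0 | h0
  · rw [← h0]
    positivity
  · have := hmain
    rw [pow_two] at this
    exact le_of_mul_le_mul_right this h0
end

section
/- Let V be a complex inner product space with norm ‖·‖, and let a : V × V → ℂ be a sesquilinear form (linear in its first argument, conjugate-linear in its second). Assume there are constants C_c > 0, γ > 0 and Θ ∈ ℂ with |Θ| = 1 such that |a(u,w)| ≤ C_c·‖u‖·‖w‖ for all u, w ∈ V, and Im(Θ·a(v,v)) ≥ γ·‖v‖² for all v ∈ V. Let V₀, …, V_N be subspaces of V and let Q₀, …, Q_N : V → V be maps such that for each ℓ and each v ∈ V, Q_ℓ v ∈ V_ℓ and a(Q_ℓ v, w) = a(v, w) for all w ∈ V_ℓ. Let v ∈ V, and suppose there exist v₀ ∈ V₀, …, v_N ∈ V_N with v = ∑_{ℓ=0}^N v_ℓ and ∑_{ℓ=0}^N ‖v_ℓ‖² ≤ C_s·‖v‖² for some C_s > 0. Then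 γ·‖v‖² ≤ C_c·√C_s·(∑_{ℓ=0}^N ‖Q_ℓ v‖²)^{1/2}·‖v‖; in particular (∑_{ℓ=0}^N ‖Q_ℓ v‖²)^{1/2} ≥ (γ/(C_c·√C_s))·‖v‖. -/
/-- Abstract form of the paper's Lemma 4.4 (lower bound on the ℓ²-sum of the local
projections): under continuity and coercivity of the sesquilinear form `a` and a
stable splitting `v = ∑ v_ℓ` with `∑ ‖v_ℓ‖² ≤ C_s ‖v‖²`, one has
`γ‖v‖² ≤ C_c √C_s (∑ ‖Q_ℓ v‖²)^{1/2} ‖v‖`, and in particular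
`(∑ ‖Q_ℓ v‖²)^{1/2} ≥ (γ/(C_c √C_s)) ‖v‖`. -/
theorem stmt_7 {V : Type*} [NormedAddCommGroup V] [InnerProductSpace ℂ V]
    (a : V → V → ℂ)
    (ha_add_left : ∀ u₁ u₂ w, a (u₁ + u₂) w = a u₁ w + a u₂ w)
    (ha_smul_left : ∀ (c : ℂ) u w, a (c • u) w = c * a u w)
    (ha_add_right : ∀ u w₁ w₂, a u (w₁ + w₂) = a u w₁ + a u w₂)
    (ha_smul_right : ∀ (c : ℂ) u w, a u (c • w) = (starRingEnd ℂ) c * a u w)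
    (Cc γ : ℝ) (hCc : 0 < Cc) (hγ : 0 < γ)
    (Θ : ℂ) (hΘ : ‖Θ‖ = 1)
    (hcont : ∀ u w, ‖a u w‖ ≤ Cc * ‖u‖ * ‖w‖)
    (hcoer : ∀ v : V, γ * ‖v‖ ^ 2 ≤ (Θ * a v v).im)
    (N : ℕ) (Vs : ℕ → Submodule ℂ V) (Q : ℕ → V → V)
    (hQmem : ∀ ℓ ≤ N, ∀ v : V, Q ℓ v ∈ Vs ℓ)
    (hQproj : ∀ ℓ ≤ N, ∀ v : V, ∀ w ∈ Vs ℓ, a (Q ℓ v) w = a v w)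
    (v : V) (vs : ℕ → V) (hvs_mem : ∀ ℓ ≤ N, vs ℓ ∈ Vs ℓ)
    (hsplit : v = ∑ ℓ ∈ Finset.range (N + 1), vs ℓ)
    (Cs : ℝ) (hCs : 0 < Cs)
    (hstable : ∑ ℓ ∈ Finset.range (N + 1), ‖vs ℓ‖ ^ 2 ≤ Cs * ‖v‖ ^ 2) :
    γ * ‖v‖ ^ 2 ≤
      Cc * Real.sqrt Cs *
        Real.sqrt (∑ ℓ ∈ Finset.range (N + 1), ‖Q ℓ v‖ ^ 2) * ‖v‖ ∧
    (γ / (Cc * Real.sqrt Cs)) * ‖v‖ ≤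
      Real.sqrt (∑ ℓ ∈ Finset.range (N + 1), ‖Q ℓ v‖ ^ 2) := by
  have ha_zero : ∀ u : V, a u 0 = 0 := by
    intro u
    have := ha_smul_right 0 u 0
    simpa using this
  set S := ∑ ℓ ∈ Finset.range (N + 1), ‖Q ℓ v‖ ^ 2 with hS
  have hSnn : 0 ≤ S := Finset.sum_nonneg fun i _ => by positivity
  -- a v v = ∑ a (Q ℓ v) (vs ℓ)
  have hsum : a v v = ∑ ℓ ∈ Finset.range (N + 1), a (Q ℓ v) (vs ℓ) := by
    have hgen : ∀ (u : V) (s : Finset ℕ), a u (∑ i ∈ s, vs i) = ∑ i ∈ s, a u (vs i) := by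
      intro u s
      induction s using Finset.cons_induction with
      | empty => simpa using ha_zero u
      | cons i s hi ih => rw [Finset.sum_cons, Finset.sum_cons, ha_add_right, ih]
    have h1 : a v v = ∑ ℓ ∈ Finset.range (N + 1), a v (vs ℓ) := by
      nth_rewrite 2 [hsplit]
      exact hgen v _
    rw [h1]
    refine Finset.sum_congr rfl fun ℓ hℓ => ?_
    have hℓN : ℓ ≤ N := Nat.lt_succ_iff.mp (Finset.mem_range.mp hℓ)
    exact (hQproj ℓ hℓN v (vs ℓ) (hvs_mem ℓ hℓN)).symm
  -- bound |a v v|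
  have habs : ‖a v v‖ ≤ Cc * Real.sqrt Cs * Real.sqrt S * ‖v‖ := by
    calc ‖a v v‖
        ≤ ∑ ℓ ∈ Finset.range (N + 1), ‖a (Q ℓ v) (vs ℓ)‖ := by
          rw [hsum]; exact norm_sum_le _ _
      _ ≤ ∑ ℓ ∈ Finset.range (N + 1), Cc * (‖Q ℓ v‖ * ‖vs ℓ‖) := by
          refine Finset.sum_le_sum fun ℓ _ => ?_
          have := hcont (Q ℓ v) (vs ℓ); linarith [this]
      _ = Cc * ∑ ℓ ∈ Finset.range (N + 1), ‖Q ℓ v‖ * ‖vs ℓ‖ := by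
          rw [Finset.mul_sum]
      _ ≤ Cc * (Real.sqrt S * Real.sqrt (∑ ℓ ∈ Finset.range (N + 1), ‖vs ℓ‖ ^ 2)) := by
          exact mul_le_mul_of_nonneg_left
            (Real.sum_mul_le_sqrt_mul_sqrt _ _ _) hCc.le
      _ ≤ Cc * (Real.sqrt S * Real.sqrt (Cs * ‖v‖ ^ 2)) := by
          refine mul_le_mul_of_nonneg_left (mul_le_mul_of_nonneg_left
            (Real.sqrt_le_sqrt hstable) (Real.sqrt_nonneg _)) hCc.le
      _ = Cc * Real.sqrt Cs * Real.sqrt S * ‖v‖ := by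
          rw [Real.sqrt_mul hCs.le, Real.sqrt_sq (norm_nonneg v)]; ring
  have hmain : γ * ‖v‖ ^ 2 ≤ Cc * Real.sqrt Cs * Real.sqrt S * ‖v‖ := by
    have h1 : γ * ‖v‖ ^ 2 ≤ (Θ * a v v).im := hcoer v
    have h2 : (Θ * a v v).im ≤ ‖Θ * a v v‖ := Complex.im_le_norm _
    have h3 : ‖Θ * a v v‖ = ‖a v v‖ := by
      rw [norm_mul, hΘ, one_mul]
    linarith
  refine ⟨hmain, ?_⟩
  have hpos : 0 < Cc * Real.sqrt Cs := mul_pos hCc (Real.sqrt_pos.mpr hCs)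
  rcases eq_or_lt_of_le (norm_nonneg v) with h0 | h0
  · rw [← h0, mul_zero]; exact Real.sqrt_nonneg _
  · rw [div_mul_eq_mul_div, div_le_iff₀ hpos]
    have : γ * ‖v‖ * ‖v‖ ≤ (Cc * Real.sqrt Cs * Real.sqrt S) * ‖v‖ := by
      have := hmain; nlinarith
    have := le_of_mul_le_mul_right this h0
    linarith
end

section
/- Let V be a complex inner product space and C : V → V a linear map. Suppose there are constants d > 0 and M > 0 such that |⟪x, Cx⟫| ≥ d·‖x‖² and ‖Cx‖ ≤ M·‖x‖ for all x ∈ V. Then d ≤ M whenever V ≠ {0}, and for every r ∈ V there exists α ∈ ℂ with ‖r − α·(Cr)‖² ≤ (1 − d²/M²)·‖r‖². -/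
/-- The one-step Elman estimate underlying the paper's Theorem 5.1: if the field of
values of the linear map `C` is at distance at least `d > 0` from the origin and
`‖C‖ ≤ M`, then `d ≤ M` (when `V ≠ {0}`) and for every `r` there is `α ∈ ℂ` with
`‖r - α C r‖² ≤ (1 - d²/M²) ‖r‖²`. -/
theorem stmt_11 {V : Type*} [NormedAddCommGroup V] [InnerProductSpace ℂ V]
    (C : V →ₗ[ℂ] V) (d M : ℝ) (hd : 0 < d) (hM : 0 < M)
    (hfov : ∀ x : V, d * ‖x‖ ^ 2 ≤ ‖(inner ℂ x (C x) : ℂ)‖)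
    (hnorm : ∀ x : V, ‖C x‖ ≤ M * ‖x‖) :
    ((∃ x : V, x ≠ 0) → d ≤ M) ∧
    ∀ r : V, ∃ α : ℂ, ‖r - α • C r‖ ^ 2 ≤ (1 - d ^ 2 / M ^ 2) * ‖r‖ ^ 2 := by
  constructor
  · rintro ⟨x, hx⟩
    have hx0 : (0:ℝ) < ‖x‖ := norm_pos_iff.mpr hx
    have h1 := hfov x
    have h2 : ‖(inner ℂ x (C x) : ℂ)‖ ≤ ‖x‖ * ‖C x‖ := by
      simpa using norm_inner_le_norm (𝕜 := ℂ) x (C x)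
    have h3 := hnorm x
    have h4 : ‖x‖ * ‖C x‖ ≤ ‖x‖ * (M * ‖x‖) :=
      mul_le_mul_of_nonneg_left h3 (norm_nonneg x)
    have h5 : d * ‖x‖ ^ 2 ≤ M * ‖x‖ ^ 2 := by nlinarith
    have hx2 : (0:ℝ) < ‖x‖ ^ 2 := by positivity
    nlinarith
  · intro r
    by_cases hr : r = 0
    · exact ⟨0, by simp [hr]⟩
    have hr0 : (0:ℝ) < ‖r‖ := norm_pos_iff.mpr hr
    set a : ℂ := inner ℂ r (C r) with ha
    have habs : d * ‖r‖ ^ 2 ≤ ‖a‖ := hfov r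
    have habs0 : (0:ℝ) < ‖a‖ := lt_of_lt_of_le (by positivity) habs
    have hCr : C r ≠ 0 := by
      intro h
      rw [ha, h] at habs0
      simp at habs0
    have hCr0 : (0:ℝ) < ‖C r‖ := norm_pos_iff.mpr hCr
    refine ⟨(starRingEnd ℂ) a / ((‖C r‖:ℂ) ^ 2), ?_⟩
    set α : ℂ := (starRingEnd ℂ) a / ((‖C r‖:ℂ) ^ 2) with hα
    have key : ‖r - α • C r‖ ^ 2 = ‖r‖ ^ 2 - ‖a‖ ^ 2 / ‖C r‖ ^ 2 := by
      have expand := @norm_sub_sq ℂ V _ _ _ r (α • C r)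
      rw [inner_smul_right, ← ha] at expand
      simp only [RCLike.re_to_complex] at expand
      have hmul : α * a = ((Complex.normSq a / ‖C r‖ ^ 2 : ℝ) : ℂ) := by
        rw [hα]
        push_cast
        rw [div_mul_eq_mul_div, mul_comm, Complex.mul_conj]
      have hre : (α * a).re = ‖a‖ ^ 2 / ‖C r‖ ^ 2 := by
        rw [hmul, Complex.ofReal_re, Complex.sq_norm]
      have hαn : ‖α‖ = ‖a‖ / ‖C r‖ ^ 2 := by
        rw [hα, norm_div]
        simp
      have hns : ‖α • C r‖ ^ 2 = ‖a‖ ^ 2 / ‖C r‖ ^ 2 := by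
        rw [norm_smul, hαn]
        field_simp
      rw [expand, hre, hns]
      ring
    rw [key]
    have h3 := hnorm r
    have hCsq : ‖C r‖ ^ 2 ≤ M ^ 2 * ‖r‖ ^ 2 := by nlinarith [norm_nonneg (C r)]
    have hsq : (d * ‖r‖ ^ 2) ^ 2 ≤ ‖a‖ ^ 2 := by
      nlinarith [mul_le_mul habs habs (show (0:ℝ) ≤ d * ‖r‖ ^ 2 by positivity) habs0.le]
    have hfrac : d ^ 2 / M ^ 2 * ‖r‖ ^ 2 ≤ ‖a‖ ^ 2 / ‖C r‖ ^ 2 := by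
      rw [div_mul_eq_mul_div, div_le_div_iff₀ (by positivity) (by positivity)]
      have h1 : d ^ 2 * ‖r‖ ^ 2 * ‖C r‖ ^ 2 ≤ (d * ‖r‖ ^ 2) ^ 2 * M ^ 2 := by
        nlinarith [mul_le_mul_of_nonneg_left hCsq (show (0:ℝ) ≤ d ^ 2 * ‖r‖ ^ 2 by positivity)]
      nlinarith [mul_le_mul_of_nonneg_right hsq (le_of_lt (pow_pos hM 2))]
    nlinarith [hfrac]
end

section
/- Let V be a complex inner product space and C : V → V a linear map. Suppose there are constants d > 0 and M > 0 such that |⟪x, Cx⟫| ≥ d·‖x‖² and ‖Cx‖ ≤ M·‖x‖ for all x ∈ V. Then for every r⁰ ∈ V and every m ∈ ℕ there exists x in the span of {C^j r⁰ : 0 ≤ j ≤ m−1} (the m-th Krylov space K^m(C, r⁰)) such that ‖r⁰ − Cx‖² ≤ (1 − d²/M²)^m · ‖r⁰‖². -/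
lemma key_step {V : Type*} [NormedAddCommGroup V] [InnerProductSpace ℂ V]
    (r t : V) (ht : t ≠ 0) :
    ‖r - ((inner ℂ t r : ℂ) / (‖t‖ ^ 2 : ℂ)) • t‖ ^ 2
      = ‖r‖ ^ 2 - ‖(inner ℂ t r : ℂ)‖ ^ 2 / ‖t‖ ^ 2 := by
  have htn : (0:ℝ) < ‖t‖ := norm_pos_iff.mpr ht
  set β : ℂ := (inner ℂ t r : ℂ) with hβ
  set α : ℂ := β / (‖t‖ ^ 2 : ℂ) with hα
  have h1 : ‖r - α • t‖ ^ 2 = ‖r‖ ^ 2 - 2 * Complex.re (inner ℂ r (α • t) : ℂ) + ‖α • t‖ ^ 2 := by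
    have := @norm_sub_sq ℂ V _ _ _ r (α • t)
    exact this
  have hrt : (inner ℂ r t : ℂ) = starRingEnd ℂ β := by rw [hβ, inner_conj_symm]
  have h2 : Complex.re (inner ℂ r (α • t) : ℂ) = ‖β‖ ^ 2 / ‖t‖ ^ 2 := by
    rw [inner_smul_right, hrt, hα, div_mul_eq_mul_div, Complex.mul_conj]
    rw [← Complex.sq_norm]
    push_cast
    rw [← Complex.ofReal_pow, ← Complex.ofReal_pow, ← Complex.ofReal_div, Complex.ofReal_re]
  have h3 : ‖α • t‖ ^ 2 = ‖β‖ ^ 2 / ‖t‖ ^ 2 := by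
    rw [norm_smul, hα]
    have : ‖β / (‖t‖ ^ 2 : ℂ)‖ = ‖β‖ / ‖t‖ ^ 2 := by
      rw [norm_div]
      norm_num
    rw [this]
    field_simp
  rw [h1, h2, h3]; ring


/-- The paper's Theorem 5.1 (Elman/Eisenstat–Elman–Schultz GMRES convergence
estimate): if the field of values of `C` is at distance at least `d > 0` from the
origin and `‖C‖ ≤ M`, then for every `r⁰` and `m` there exists `x` in the `m`-th
Krylov space `K^m(C, r⁰) = span {C^j r⁰ : 0 ≤ j ≤ m-1}` with
`‖r⁰ - C x‖² ≤ (1 - d²/M²)^m ‖r⁰‖²`. -/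
theorem stmt_12 {V : Type*} [NormedAddCommGroup V] [InnerProductSpace ℂ V]
    (C : V →ₗ[ℂ] V) (d M : ℝ) (hd : 0 < d) (hM : 0 < M)
    (hfov : ∀ x : V, d * ‖x‖ ^ 2 ≤ ‖(inner ℂ x (C x) : ℂ)‖)
    (hnorm : ∀ x : V, ‖C x‖ ≤ M * ‖x‖)
    (r0 : V) (m : ℕ) :
    ∃ x ∈ Submodule.span ℂ {y : V | ∃ j < m, y = (C ^ j) r0},
      ‖r0 - C x‖ ^ 2 ≤ (1 - d ^ 2 / M ^ 2) ^ m * ‖r0‖ ^ 2 := by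
  by_cases h0 : r0 = 0
  · exact ⟨0, Submodule.zero_mem _, by simp [h0]⟩
  have hr0 : (0:ℝ) < ‖r0‖ := norm_pos_iff.mpr h0
  have hdM : d ≤ M := by
    have h1 := hfov r0
    have h2 : ‖(inner ℂ r0 (C r0) : ℂ)‖ ≤ M * ‖r0‖ ^ 2 := by
      calc ‖(inner ℂ r0 (C r0) : ℂ)‖ = ‖(inner ℂ r0 (C r0) : ℂ)‖ := rfl
        _ ≤ ‖r0‖ * ‖C r0‖ := norm_inner_le_norm _ _
        _ ≤ ‖r0‖ * (M * ‖r0‖) := by nlinarith [norm_nonneg r0, hnorm r0, norm_nonneg (C r0)]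
        _ = M * ‖r0‖ ^ 2 := by ring
    nlinarith [pow_pos hr0 2]
  have hc0 : 0 ≤ 1 - d ^ 2 / M ^ 2 := by
    rw [sub_nonneg, div_le_one (by positivity)]
    nlinarith
  induction m with
  | zero => exact ⟨0, Submodule.zero_mem _, by simp⟩
  | succ m ih =>
    obtain ⟨x, hx, hb⟩ := ih
    have hmono : Submodule.span ℂ {y : V | ∃ j < m, y = (C ^ j) r0} ≤
        Submodule.span ℂ {y : V | ∃ j < m + 1, y = (C ^ j) r0} :=
      Submodule.span_mono (fun y ⟨j, hj, hy⟩ => ⟨j, Nat.lt_succ_of_lt hj, hy⟩)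
    set r := r0 - C x with hrdef
    by_cases hrz : r = 0
    · refine ⟨x, hmono hx, ?_⟩
      rw [← hrdef, hrz]
      have : (0:ℝ) ≤ (1 - d ^ 2 / M ^ 2) ^ (m + 1) * ‖r0‖ ^ 2 := by positivity
      simpa using this
    · have hrn : (0:ℝ) < ‖r‖ := norm_pos_iff.mpr hrz
      have hCr : C r ≠ 0 := by
        intro h
        have h1 := hfov r
        rw [h] at h1
        simp at h1
        nlinarith [mul_pos hd (pow_pos hrn 2)]
      have hCrn : (0:ℝ) < ‖C r‖ := norm_pos_iff.mpr hCr
      -- membership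
      have hCx : C x ∈ Submodule.span ℂ {y : V | ∃ j < m + 1, y = (C ^ j) r0} := by
        have h1 : C x ∈ Submodule.map C (Submodule.span ℂ {y : V | ∃ j < m, y = (C ^ j) r0}) :=
          Submodule.mem_map_of_mem hx
        rw [Submodule.map_span] at h1
        refine Submodule.span_mono ?_ h1
        rintro _ ⟨y, ⟨j, hj, rfl⟩, rfl⟩
        exact ⟨j + 1, Nat.succ_lt_succ hj, by rw [← Module.End.mul_apply, ← pow_succ']⟩
      have hr0mem : r0 ∈ Submodule.span ℂ {y : V | ∃ j < m + 1, y = (C ^ j) r0} :=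
        Submodule.subset_span ⟨0, Nat.succ_pos m, by simp⟩
      have hrmem : r ∈ Submodule.span ℂ {y : V | ∃ j < m + 1, y = (C ^ j) r0} :=
        Submodule.sub_mem _ hr0mem hCx
      set α : ℂ := (inner ℂ (C r) r : ℂ) / (‖C r‖ ^ 2 : ℂ) with hα
      refine ⟨x + α • r, Submodule.add_mem _ (hmono hx) (Submodule.smul_mem _ _ hrmem), ?_⟩
      have hres : r0 - C (x + α • r) = r - α • C r := by
        rw [map_add, map_smul]
        rw [hrdef]; abel
      rw [hres]
      have hkey := key_step r (C r) hCr
      rw [← hα] at hkey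
      -- bound the decrease
      have habs : ‖(inner ℂ (C r) r : ℂ)‖ = ‖(inner ℂ r (C r) : ℂ)‖ := by
        rw [← inner_conj_symm r (C r), Complex.norm_conj]
      have hlow : d ^ 2 / M ^ 2 * ‖r‖ ^ 2 ≤ ‖(inner ℂ (C r) r : ℂ)‖ ^ 2 / ‖C r‖ ^ 2 := by
        rw [div_mul_eq_mul_div, div_le_div_iff₀ (by positivity) (by positivity)]
        have h1 : d * ‖r‖ ^ 2 ≤ ‖(inner ℂ (C r) r : ℂ)‖ := habs ▸ hfov r
        have h2 : ‖C r‖ ≤ M * ‖r‖ := hnorm r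
        have hb1 : d ^ 2 * ‖r‖ ^ 4 ≤ ‖(inner ℂ (C r) r : ℂ)‖ ^ 2 := by
          nlinarith [norm_nonneg r, mul_pos hd (pow_pos hrn 2)]
        have hb2 : ‖C r‖ ^ 2 ≤ M ^ 2 * ‖r‖ ^ 2 := by
          nlinarith [norm_nonneg (C r), norm_nonneg r]
        nlinarith [mul_le_mul_of_nonneg_left hb2 (show (0:ℝ) ≤ d ^ 2 * ‖r‖ ^ 2 by positivity),
          mul_le_mul_of_nonneg_left hb1 (show (0:ℝ) ≤ M ^ 2 by positivity)]
      have hstep : ‖r - α • C r‖ ^ 2 ≤ (1 - d ^ 2 / M ^ 2) * ‖r‖ ^ 2 := by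
        rw [hkey]; nlinarith
      calc ‖r - α • C r‖ ^ 2 ≤ (1 - d ^ 2 / M ^ 2) * ‖r‖ ^ 2 := hstep
        _ ≤ (1 - d ^ 2 / M ^ 2) * ((1 - d ^ 2 / M ^ 2) ^ m * ‖r0‖ ^ 2) := by
            apply mul_le_mul_of_nonneg_left _ hc0
            rw [hrdef]; exact hb
        _ = (1 - d ^ 2 / M ^ 2) ^ (m + 1) * ‖r0‖ ^ 2 := by ring
end
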